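/- A topological product X = ∏_{s∈S} X_s of a family of nonempty topological spaces has property (III_ℵ) if and only if every factor X_s has property (III_ℵ). -/

import Mathlib

universe u

open Cardinal

/-- Property (I_ℵ): every locally finite family of nonempty open sets has cardinality ≤ ℵ. -/
def PropI (c : Cardinal.{u}) (X : Type u) [TopologicalSpace X] : Prop :=
  ∀ (I : Type u) (U : I → Set X), (∀ i, IsOpen (U i)) → (∀ i, (U i).Nonempty) →
    LocallyFinite U → #I ≤ c

/-- Property (II_ℵ): every pointwise finite family of nonempty open sets has cardinality ≤ ℵ. -/
def PropII (c : Cardinal.{u}) (X : Type u) [TopologicalSpace X] : Prop :=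
  ∀ (I : Type u) (U : I → Set X), (∀ i, IsOpen (U i)) → (∀ i, (U i).Nonempty) →
    (∀ x : X, {i | x ∈ U i}.Finite) → #I ≤ c

/-- Property (III_ℵ): every ℵ-pointwise family of nonempty open sets has cardinality ≤ ℵ. -/
def PropIII (c : Cardinal.{u}) (X : Type u) [TopologicalSpace X] : Prop :=
  ∀ (I : Type u) (U : I → Set X), (∀ i, IsOpen (U i)) → (∀ i, (U i).Nonempty) →
    (∀ x : X, #{i | x ∈ U i} ≤ c) → #I ≤ c

/-- Key combinatorial lemma: given more than `c` "boxes" with supports of size at most `n`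
in a product of spaces each satisfying (III), some point lies in more than `c` boxes. -/
lemma key_boxes (c : Cardinal.{u}) (hc : Cardinal.aleph0 ≤ c)
    {S : Type u} {X : S → Type u} [∀ s, TopologicalSpace (X s)] [∀ s, Nonempty (X s)]
    (hX : ∀ s, PropIII c (X s)) :
    ∀ (n : ℕ) (I : Type u) (F : I → Finset S) (V : ∀ _ : I, ∀ s : S, Set (X s)),
      (∀ i, ∀ s ∈ F i, IsOpen (V i s)) →
      (∀ i, ∀ s ∈ F i, (V i s).Nonempty) →
      (∀ i, (F i).card ≤ n) → c < #I →
      ∃ x : ∀ s, X s, c < #{i | ∀ s ∈ F i, x s ∈ V i s} := by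
  classical
  intro n
  induction n with
  | zero =>
    intro I F V _ hVne hcard hI
    refine ⟨Classical.arbitrary _, ?_⟩
    have h : {i | ∀ s ∈ F i, (Classical.arbitrary (∀ s, X s)) s ∈ V i s} = Set.univ := by
      ext i
      have : F i = ∅ := Finset.card_eq_zero.mp (Nat.le_zero.mp (hcard i))
      simp [this]
    rw [h, Cardinal.mk_univ]
    exact hI
  | succ n ih =>
    intro I F V hVo hVne hcard hI
    by_cases hT : ∃ s₀ : S, c < #{i | s₀ ∈ F i}
    · -- Case A: some coordinate is used by more than c boxes
      obtain ⟨s₀, hs₀⟩ := hT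
      set J : Set I := {i | s₀ ∈ F i} with hJdef
      have hex : ∃ x₀ : X s₀, c < #{j : J | x₀ ∈ V j s₀} := by
        by_contra hcon
        push_neg at hcon
        exact absurd (hX s₀ J (fun j => V j s₀)
          (fun j => hVo j s₀ j.2) (fun j => hVne j s₀ j.2) hcon) (not_le.mpr hs₀)
      obtain ⟨x₀, hx₀⟩ := hex
      set K : Set J := {j : J | x₀ ∈ V j s₀} with hKdef
      have hKcards : ∀ k : K, ((F (k : I)).erase s₀).card ≤ n := by
        intro k
        have hmem : s₀ ∈ F (k : I) := k.1.2
        rw [Finset.card_erase_of_mem hmem]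
        have := hcard (k : I)
        omega
      obtain ⟨y, hy⟩ := ih K (fun k => (F (k : I)).erase s₀) (fun k => V (k : I))
        (fun k s hs => hVo _ s (Finset.mem_of_mem_erase hs))
        (fun k s hs => hVne _ s (Finset.mem_of_mem_erase hs)) hKcards hx₀
      set x : ∀ s, X s := Function.update y s₀ x₀ with hxdef
      refine ⟨x, ?_⟩
      have hprop : ∀ e : {k : K | ∀ t ∈ (F (k : I)).erase s₀, y t ∈ V (k : I) t},
          ((e : K) : I) ∈ {i : I | ∀ s ∈ F i, x s ∈ V i s} := by
        intro e s hs
        by_cases hss : s = s₀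
        · subst hss
          have : x s = x₀ := Function.update_self _ _ _
          rw [this]
          exact e.1.2
        · have hxs : x s = y s := Function.update_of_ne hss _ _
          rw [hxs]
          exact e.2 s (Finset.mem_erase.mpr ⟨hss, hs⟩)
      have hinj : Function.Injective
          (fun e : {k : K | ∀ t ∈ (F (k : I)).erase s₀, y t ∈ V (k : I) t} =>
            (⟨((e : K) : I), hprop e⟩ : {i : I | ∀ s ∈ F i, x s ∈ V i s})) := by
        intro a b hab
        have h1 := congrArg Subtype.val hab
        exact Subtype.ext (Subtype.ext (Subtype.ext h1))
      exact lt_of_lt_of_le hy (Cardinal.mk_le_of_injective hinj)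
    · -- Case B: every coordinate is used by at most c boxes
      push_neg at hT
      set 𝒮 : Set (Set I) := {J | J.Pairwise fun i j => Disjoint (F i) (F j)} with h𝒮
      obtain ⟨J, hJmax⟩ := zorn_subset 𝒮 (by
        intro ch hch hchain
        refine ⟨⋃₀ ch, ?_, fun t ht => Set.subset_sUnion_of_mem ht⟩
        intro i hi j hj hij
        obtain ⟨t₁, ht₁, hit₁⟩ := hi
        obtain ⟨t₂, ht₂, hjt₂⟩ := hj
        rcases hchain.total ht₁ ht₂ with h | h
        · exact hch ht₂ (h hit₁) hjt₂ hij
        · exact hch ht₁ hit₁ (h hjt₂) hij)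
      have hJpair : J.Pairwise fun i j => Disjoint (F i) (F j) := hJmax.1
      have hJbig : c < #J := by
        by_contra hsm
        push_neg at hsm
        set A : Set S := ⋃ i ∈ J, (F i : Set S) with hA
        have hAcard : #A ≤ c := by
          refine le_trans (Cardinal.mk_biUnion_le _ _) ?_
          have h1 : ⨆ i : J, #((F (i : I)) : Set S) ≤ c := by
            refine ciSup_le' fun i => ?_
            exact le_trans (le_of_lt (Cardinal.lt_aleph0_of_finite _)) hc
          calc #J * ⨆ i : J, #((F (i : I)) : Set S) ≤ c * c :=
                mul_le_mul' hsm h1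
            _ = c := Cardinal.mul_eq_self hc
        set B : Set I := ⋃ s ∈ A, {i | s ∈ F i} with hB
        have hBcard : #B ≤ c := by
          refine le_trans (Cardinal.mk_biUnion_le _ _) ?_
          have h1 : ⨆ s : A, #{i | (s : S) ∈ F i} ≤ c := ciSup_le' fun s => hT _
          calc #A * ⨆ s : A, #{i | (s : S) ∈ F i} ≤ c * c := mul_le_mul' hAcard h1
            _ = c := Cardinal.mul_eq_self hc
        have hJB : #(J ∪ B : Set I) ≤ c := by
          refine le_trans (Cardinal.mk_union_le _ _) ?_
          calc #J + #B ≤ c + c := add_le_add hsm hBcard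
            _ = c := Cardinal.add_eq_self hc
        have hne : (J ∪ B) ≠ Set.univ := by
          intro h
          rw [h, Cardinal.mk_univ] at hJB
          exact absurd hJB (not_le.mpr hI)
        obtain ⟨i₀, hi₀⟩ : ∃ i₀, i₀ ∉ J ∪ B := by
          by_contra h
          push_neg at h
          exact hne (Set.eq_univ_iff_forall.mpr h)
        have hi₀J : i₀ ∉ J := fun h => hi₀ (Or.inl h)
        have hi₀B : i₀ ∉ B := fun h => hi₀ (Or.inr h)
        have hins : insert i₀ J ∈ 𝒮 := by
          haveI : Std.Symm (fun i j => Disjoint (F i) (F j)) := ⟨fun i j h => h.symm⟩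
          refine (Set.pairwise_insert_of_symm).mpr ⟨hJpair, fun j hj _ => ?_⟩
          rw [Finset.disjoint_left]
          intro t ht htj
          exact hi₀B (Set.mem_biUnion (Set.mem_biUnion hj htj) ht)
        exact hi₀J (hJmax.2 hins (Set.subset_insert _ _) (Set.mem_insert _ _))
      -- choose a point in every box with index in J, using disjointness of supports
      set x : ∀ s, X s := fun s =>
        if h : ∃ i ∈ J, s ∈ F i then (hVne h.choose s h.choose_spec.2).some
        else Classical.arbitrary _ with hxdef
      have hJsub : J ⊆ {i | ∀ s ∈ F i, x s ∈ V i s} := by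
        intro i hi s hs
        have h : ∃ i ∈ J, s ∈ F i := ⟨i, hi, hs⟩
        have hxs : x s = (hVne h.choose s h.choose_spec.2).some := by
          rw [hxdef]; exact dif_pos h
        have hchoose : h.choose = i := by
          by_contra hne
          exact Finset.disjoint_left.mp (hJpair h.choose_spec.1 hi hne)
            h.choose_spec.2 hs
        have h2 : x s ∈ V h.choose s := by
          rw [hxs]; exact (hVne h.choose s h.choose_spec.2).some_mem
        rw [hchoose] at h2
        exact h2
      exact ⟨x, lt_of_lt_of_le hJbig (Cardinal.mk_le_mk_of_subset hJsub)⟩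

theorem stmt2 (c : Cardinal.{u}) (hc : Cardinal.aleph0 ≤ c)
    (S : Type u) (X : S → Type u) [∀ s, TopologicalSpace (X s)]
    [∀ s, Nonempty (X s)] :
    PropIII c (∀ s, X s) ↔ ∀ s, PropIII c (X s) := by
  classical
  constructor
  · intro h s I U hopen hne hpt
    refine h I (fun i => (fun f : ∀ t, X t => f s) ⁻¹' U i)
      (fun i => (continuous_apply s).isOpen_preimage _ (hopen i)) ?_ ?_
    · intro i
      obtain ⟨u, hu⟩ := hne i
      exact ⟨Function.update (Classical.arbitrary _) s u, by
        simp only [Set.mem_preimage, Function.update_self]; exact hu⟩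
    · intro f
      exact hpt (f s)
  · intro hX I U hopen hne hpt
    by_contra hcon
    rw [not_le] at hcon
    have hmem : ∀ i, (hne i).some ∈ U i := fun i => (hne i).some_mem
    have hboxes := fun i => (isOpen_pi_iff.mp (hopen i)) (hne i).some (hmem i)
    choose F V hFV hsub using hboxes
    -- pigeonhole: some value of (F i).card occurs for more than c indices
    have hpig : ∃ n : ℕ, c < #((fun i => (F i).card) ⁻¹' {n}) := by
      by_contra h
      push_neg at h
      have huniv : (⋃ m : ULift.{u} ℕ, (fun i => (F i).card) ⁻¹' {m.down}) = Set.univ := by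
        ext i
        simp only [Set.mem_iUnion, Set.mem_preimage, Set.mem_singleton_iff, Set.mem_univ,
          iff_true]
        exact ⟨ULift.up ((F i).card), rfl⟩
      have : #I ≤ c := by
        calc #I = #(⋃ m : ULift.{u} ℕ, (fun i => (F i).card) ⁻¹' {m.down}) := by
              rw [huniv, Cardinal.mk_univ]
          _ ≤ #(ULift.{u} ℕ) * ⨆ m : ULift.{u} ℕ, #((fun i => (F i).card) ⁻¹' {m.down}) :=
              Cardinal.mk_iUnion_le _
          _ ≤ ℵ₀ * c := by
              refine mul_le_mul' ?_ (ciSup_le' fun m => h m.down)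
              rw [Cardinal.mk_denumerable]
          _ ≤ c * c := mul_le_mul' hc le_rfl
          _ = c := Cardinal.mul_eq_self hc
      exact absurd this (not_le.mpr hcon)
    obtain ⟨n, hn⟩ := hpig
    set In : Set I := (fun i => (F i).card) ⁻¹' {n} with hIn
    obtain ⟨x, hx⟩ := key_boxes c hc hX n In (fun i => F (i : I)) (fun i => V (i : I))
      (fun i s hs => (hFV (i : I) s hs).1)
      (fun i s hs => ⟨(hne (i : I)).some s, (hFV (i : I) s hs).2⟩)
      (fun i => le_of_eq i.2) hn
    have hprop : ∀ e : {i : In | ∀ s ∈ F (i : I), x s ∈ V (i : I) s},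
        ((e : In) : I) ∈ {i : I | x ∈ U i} := by
      intro e
      refine hsub ((e : In) : I) ?_
      intro s hs
      exact e.2 s (Finset.mem_coe.mp hs)
    have hinj : Function.Injective
        (fun e : {i : In | ∀ s ∈ F (i : I), x s ∈ V (i : I) s} =>
          (⟨((e : In) : I), hprop e⟩ : {i : I | x ∈ U i})) := by
      intro a b hab
      have h1 := congrArg Subtype.val hab
      exact Subtype.ext (Subtype.ext h1)
    have := lt_of_lt_of_le hx (Cardinal.mk_le_of_injective hinj)
    exact absurd (hpt x) (not_le.mpr this)
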